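/- Define C_{2/3} : [0,1]² → [0,1] by C_{2/3}(x,y) = x if 0 ≤ x ≤ (2/3)y; C_{2/3}(x,y) = (2/3)y if (2/3)y ≤ x ≤ 2/3; and C_{2/3}(x,y) = xy if 2/3 ≤ x ≤ 1. Then ∫₀¹∫₀¹ |C_{2/3}(x,y) − C_{2/3}(y,x)| dx dy = 10/243 and (∫₀¹∫₀¹ |C_{2/3}(x,y) − C_{2/3}(y,x)|² dx dy)^{1/2} = (2/81)·√(74/15). -/

import Mathlib

open MeasureTheory intervalIntegral Set

/-- The Marshall copula `C_{2/3}`. -/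
noncomputable def C23 : ℝ → ℝ → ℝ := fun x y =>
  if x ≤ (2 / 3) * y then x else if x ≤ 2 / 3 then (2 / 3) * y else x * y

lemma ilin (a b c d : ℝ) :
    (∫ y in a..b, (c + d*y)) = (c*b + d*b^2/2) - (c*a + d*a^2/2) := by
  have hder : ∀ y ∈ Set.uIcc a b,
      HasDerivAt (fun y : ℝ => c*y + d*y^2/2) (c + d*y) y := by
    intro y _
    have a1 : HasDerivAt (fun y : ℝ => y) 1 y := hasDerivAt_id y
    have a2 : HasDerivAt (fun y : ℝ => y^2) (2*y) y := by simpa using hasDerivAt_pow 2 y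
    have h := (a1.const_mul c).add ((a2.const_mul d).div_const 2)
    exact h.congr_deriv (by ring)
  rw [intervalIntegral.integral_eq_sub_of_hasDerivAt hder
    ((by continuity : Continuous fun y : ℝ => c + d*y).intervalIntegrable a b)]

lemma iquad (a b c d e : ℝ) :
    (∫ y in a..b, (c + d*y + e*y^2)) =
      (c*b + d*b^2/2 + e*b^3/3) - (c*a + d*a^2/2 + e*a^3/3) := by
  have hder : ∀ y ∈ Set.uIcc a b,
      HasDerivAt (fun y : ℝ => c*y + d*y^2/2 + e*y^3/3) (c + d*y + e*y^2) y := by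
    intro y _
    have a1 : HasDerivAt (fun y : ℝ => y) 1 y := hasDerivAt_id y
    have a2 : HasDerivAt (fun y : ℝ => y^2) (2*y) y := by simpa using hasDerivAt_pow 2 y
    have a3 : HasDerivAt (fun y : ℝ => y^3) (3*y^2) y := by simpa using hasDerivAt_pow 3 y
    have h := ((a1.const_mul c).add ((a2.const_mul d).div_const 2)).add
      ((a3.const_mul e).div_const 3)
    exact h.congr_deriv (by ring)
  rw [intervalIntegral.integral_eq_sub_of_hasDerivAt hder
    ((by continuity : Continuous fun y : ℝ => c + d*y + e*y^2).intervalIntegrable a b)]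

lemma ipoly4 (a b c0 c1 c2 c3 c4 : ℝ) :
    (∫ y in a..b, (c0 + c1*y + c2*y^2 + c3*y^3 + c4*y^4)) =
      (c0*b + c1*b^2/2 + c2*b^3/3 + c3*b^4/4 + c4*b^5/5)
      - (c0*a + c1*a^2/2 + c2*a^3/3 + c3*a^4/4 + c4*a^5/5) := by
  have hder : ∀ y ∈ Set.uIcc a b,
      HasDerivAt (fun y : ℝ => c0*y + c1*y^2/2 + c2*y^3/3 + c3*y^4/4 + c4*y^5/5)
        (c0 + c1*y + c2*y^2 + c3*y^3 + c4*y^4) y := by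
    intro y _
    have a1 : HasDerivAt (fun y : ℝ => y) 1 y := hasDerivAt_id y
    have a2 : HasDerivAt (fun y : ℝ => y^2) (2*y) y := by simpa using hasDerivAt_pow 2 y
    have a3 : HasDerivAt (fun y : ℝ => y^3) (3*y^2) y := by simpa using hasDerivAt_pow 3 y
    have a4 : HasDerivAt (fun y : ℝ => y^4) (4*y^3) y := by simpa using hasDerivAt_pow 4 y
    have a5 : HasDerivAt (fun y : ℝ => y^5) (5*y^4) y := by simpa using hasDerivAt_pow 5 y
    have h := (((((a1.const_mul c0).add ((a2.const_mul c1).div_const 2)).add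
      ((a3.const_mul c2).div_const 3)).add ((a4.const_mul c3).div_const 4)).add
      ((a5.const_mul c4).div_const 5))
    exact h.congr_deriv (by ring)
  rw [intervalIntegral.integral_eq_sub_of_hasDerivAt hder
    ((by continuity :
      Continuous fun y : ℝ => c0 + c1*y + c2*y^2 + c3*y^3 + c4*y^4).intervalIntegrable a b)]

lemma II_of_eq {f g : ℝ → ℝ} {a b : ℝ} (hab : a ≤ b)
    (h : ∀ y ∈ Set.Icc a b, f y = g y) (hg : Continuous g) :
    IntervalIntegrable f volume a b := by
  have heq : Set.EqOn g f (Set.Ioc a b) := fun y hy => (h y (Set.Ioc_subset_Icc_self hy)).symm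
  refine ⟨(hg.intervalIntegrable a b).1.congr_fun heq measurableSet_Ioc, ?_⟩
  rw [Set.Ioc_eq_empty (by simpa using hab)]
  exact MeasureTheory.integrableOn_empty

lemma int_congr_Icc {f g : ℝ → ℝ} {a b : ℝ} (hab : a ≤ b)
    (h : ∀ y ∈ Set.Icc a b, f y = g y) :
    (∫ y in a..b, f y) = ∫ y in a..b, g y :=
  intervalIntegral.integral_congr (by rw [Set.uIcc_of_le hab]; exact h)

lemma piece1 (x a b c d : ℝ) (hab : a ≤ b)
    (h : ∀ y ∈ Set.Icc a b, |C23 x y - C23 y x| = c + d*y) :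
    (∫ y in a..b, |C23 x y - C23 y x|) = (c*b + d*b^2/2) - (c*a + d*a^2/2) := by
  rw [int_congr_Icc hab h]; exact ilin a b c d

lemma piece2 (x a b c d : ℝ) (hab : a ≤ b)
    (h : ∀ y ∈ Set.Icc a b, |C23 x y - C23 y x| = c + d*y) :
    (∫ y in a..b, |C23 x y - C23 y x|^2) =
      (c^2*b + (2*c*d)*b^2/2 + d^2*b^3/3) - (c^2*a + (2*c*d)*a^2/2 + d^2*a^3/3) := by
  rw [int_congr_Icc hab (g := fun y => c^2 + (2*c*d)*y + d^2*y^2)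
    (fun y hy => by rw [h y hy]; ring)]
  exact iquad a b (c^2) (2*c*d) (d^2)

lemma pieceII (x a b c d : ℝ) (hab : a ≤ b)
    (h : ∀ y ∈ Set.Icc a b, |C23 x y - C23 y x| = c + d*y) :
    IntervalIntegrable (fun y => |C23 x y - C23 y x|) volume a b :=
  II_of_eq hab h (by continuity)

lemma pieceII2 (x a b c d : ℝ) (hab : a ≤ b)
    (h : ∀ y ∈ Set.Icc a b, |C23 x y - C23 y x| = c + d*y) :
    IntervalIntegrable (fun y => |C23 x y - C23 y x|^2) volume a b :=
  II_of_eq hab (g := fun y => (c + d*y)^2) (fun y hy => by rw [h y hy]) (by continuity)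

lemma eR1P1 (x : ℝ) (h0 : 0 ≤ x) (h4 : x ≤ 4/9) :
    ∀ y ∈ Set.Icc (0:ℝ) (2/3*x), |C23 x y - C23 y x| = 0 + (1/3)*y := by
  intro y hy; obtain ⟨hy0, hy1⟩ := hy
  have hD : C23 x y - C23 y x = -(0 + (1/3)*y) := by
    simp only [C23]
    split_ifs <;> nlinarith [mul_nonneg h0 hy0]
  rw [hD, abs_neg, abs_of_nonneg (by linarith : (0:ℝ) ≤ 0 + (1/3)*y)]

lemma eR1P2 (x : ℝ) (h0 : 0 ≤ x) (h4 : x ≤ 4/9) :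
    ∀ y ∈ Set.Icc (2/3*x) x, |C23 x y - C23 y x| = 2/3*x + (-(2/3))*y := by
  intro y hy; obtain ⟨hy0, hy1⟩ := hy
  have hD : C23 x y - C23 y x = -(2/3*x + (-(2/3))*y) := by
    simp only [C23]
    split_ifs <;> nlinarith [mul_nonneg h0 (by linarith : (0:ℝ) ≤ y)]
  rw [hD, abs_neg, abs_of_nonneg (by linarith : (0:ℝ) ≤ 2/3*x + (-(2/3))*y)]

lemma eR1P3 (x : ℝ) (h0 : 0 ≤ x) (h4 : x ≤ 4/9) :
    ∀ y ∈ Set.Icc x (3/2*x), |C23 x y - C23 y x| = -(2/3)*x + (2/3)*y := by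
  intro y hy; obtain ⟨hy0, hy1⟩ := hy
  have hD : C23 x y - C23 y x = -(2/3)*x + (2/3)*y := by
    simp only [C23]
    split_ifs <;> nlinarith [mul_nonneg h0 (by linarith : (0:ℝ) ≤ y)]
  rw [hD, abs_of_nonneg (by linarith : (0:ℝ) ≤ -(2/3)*x + (2/3)*y)]

lemma eR1P4 (x : ℝ) (h0 : 0 ≤ x) (h4 : x ≤ 4/9) :
    ∀ y ∈ Set.Icc (3/2*x) (2/3), |C23 x y - C23 y x| = 1/3*x + 0*y := by
  intro y hy; obtain ⟨hy0, hy1⟩ := hy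
  have hD : C23 x y - C23 y x = 1/3*x + 0*y := by
    simp only [C23]
    split_ifs <;> nlinarith [mul_nonneg h0 (by linarith : (0:ℝ) ≤ y)]
  rw [hD, abs_of_nonneg (by linarith : (0:ℝ) ≤ 1/3*x + 0*y)]

lemma eR1P5 (x : ℝ) (h0 : 0 ≤ x) (h4 : x ≤ 4/9) :
    ∀ y ∈ Set.Icc (2/3 : ℝ) 1, |C23 x y - C23 y x| = x + (-x)*y := by
  intro y hy; obtain ⟨hy0, hy1⟩ := hy
  have hD : C23 x y - C23 y x = x + (-x)*y := by
    simp only [C23]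
    split_ifs <;> nlinarith [mul_nonneg h0 (by linarith : (0:ℝ) ≤ y)]
  rw [hD, abs_of_nonneg (by nlinarith : (0:ℝ) ≤ x + (-x)*y)]

lemma eR2P1 (x : ℝ) (h4 : 4/9 ≤ x) (h6 : x ≤ 2/3) :
    ∀ y ∈ Set.Icc (0:ℝ) (2/3*x), |C23 x y - C23 y x| = 0 + (1/3)*y := by
  intro y hy; obtain ⟨hy0, hy1⟩ := hy
  have hD : C23 x y - C23 y x = -(0 + (1/3)*y) := by
    simp only [C23]
    split_ifs <;> nlinarith [mul_nonneg (by linarith : (0:ℝ) ≤ x) hy0]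
  rw [hD, abs_neg, abs_of_nonneg (by linarith : (0:ℝ) ≤ 0 + (1/3)*y)]

lemma eR2P2 (x : ℝ) (h4 : 4/9 ≤ x) (h6 : x ≤ 2/3) :
    ∀ y ∈ Set.Icc (2/3*x) x, |C23 x y - C23 y x| = 2/3*x + (-(2/3))*y := by
  intro y hy; obtain ⟨hy0, hy1⟩ := hy
  have hD : C23 x y - C23 y x = -(2/3*x + (-(2/3))*y) := by
    simp only [C23]
    split_ifs <;> nlinarith [mul_nonneg (by linarith : (0:ℝ) ≤ x) (by linarith : (0:ℝ) ≤ y)]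
  rw [hD, abs_neg, abs_of_nonneg (by linarith : (0:ℝ) ≤ 2/3*x + (-(2/3))*y)]

lemma eR2P3 (x : ℝ) (h4 : 4/9 ≤ x) (h6 : x ≤ 2/3) :
    ∀ y ∈ Set.Icc x (2/3 : ℝ), |C23 x y - C23 y x| = -(2/3)*x + (2/3)*y := by
  intro y hy; obtain ⟨hy0, hy1⟩ := hy
  have hD : C23 x y - C23 y x = -(2/3)*x + (2/3)*y := by
    simp only [C23]
    split_ifs <;> nlinarith [mul_nonneg (by linarith : (0:ℝ) ≤ x) (by linarith : (0:ℝ) ≤ y)]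
  rw [hD, abs_of_nonneg (by linarith : (0:ℝ) ≤ -(2/3)*x + (2/3)*y)]

lemma eR2P4 (x : ℝ) (h4 : 4/9 ≤ x) (h6 : x ≤ 2/3) :
    ∀ y ∈ Set.Icc (2/3 : ℝ) (3/2*x), |C23 x y - C23 y x| = 0 + (2/3 - x)*y := by
  intro y hy; obtain ⟨hy0, hy1⟩ := hy
  have hD : C23 x y - C23 y x = 0 + (2/3 - x)*y := by
    simp only [C23]
    split_ifs <;> nlinarith [mul_nonneg (by linarith : (0:ℝ) ≤ x) (by linarith : (0:ℝ) ≤ y)]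
  rw [hD, abs_of_nonneg (by nlinarith : (0:ℝ) ≤ 0 + (2/3 - x)*y)]

lemma eR2P5 (x : ℝ) (h4 : 4/9 ≤ x) (h6 : x ≤ 2/3) :
    ∀ y ∈ Set.Icc (3/2*x) (1:ℝ), |C23 x y - C23 y x| = x + (-x)*y := by
  intro y hy; obtain ⟨hy0, hy1⟩ := hy
  have hD : C23 x y - C23 y x = x + (-x)*y := by
    simp only [C23]
    split_ifs <;> nlinarith [mul_nonneg (by linarith : (0:ℝ) ≤ x) (by linarith : (0:ℝ) ≤ y)]
  rw [hD, abs_of_nonneg (by nlinarith : (0:ℝ) ≤ x + (-x)*y)]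

lemma eR3P1 (x : ℝ) (h6 : 2/3 ≤ x) (h1 : x ≤ 1) :
    ∀ y ∈ Set.Icc (0:ℝ) (2/3*x), |C23 x y - C23 y x| = 0 + (1 - x)*y := by
  intro y hy; obtain ⟨hy0, hy1⟩ := hy
  have hD : C23 x y - C23 y x = -(0 + (1 - x)*y) := by
    simp only [C23]
    split_ifs <;> nlinarith [mul_nonneg (by linarith : (0:ℝ) ≤ x) hy0]
  rw [hD, abs_neg, abs_of_nonneg (by nlinarith : (0:ℝ) ≤ 0 + (1 - x)*y)]

lemma eR3P2 (x : ℝ) (h6 : 2/3 ≤ x) (h1 : x ≤ 1) :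
    ∀ y ∈ Set.Icc (2/3*x) (2/3 : ℝ), |C23 x y - C23 y x| = 2/3*x + (-x)*y := by
  intro y hy; obtain ⟨hy0, hy1⟩ := hy
  have hD : C23 x y - C23 y x = -(2/3*x + (-x)*y) := by
    simp only [C23]
    split_ifs <;> nlinarith [mul_nonneg (by linarith : (0:ℝ) ≤ x) (by linarith : (0:ℝ) ≤ y)]
  rw [hD, abs_neg, abs_of_nonneg (by nlinarith : (0:ℝ) ≤ 2/3*x + (-x)*y)]

lemma eR3P3 (x : ℝ) (h6 : 2/3 ≤ x) (h1 : x ≤ 1) :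
    ∀ y ∈ Set.Icc (2/3 : ℝ) 1, |C23 x y - C23 y x| = 0 + 0*y := by
  intro y hy; obtain ⟨hy0, hy1⟩ := hy
  have hD : C23 x y - C23 y x = 0 + 0*y := by
    simp only [C23]
    split_ifs <;> nlinarith [mul_nonneg (by linarith : (0:ℝ) ≤ x) (by linarith : (0:ℝ) ≤ y)]
  rw [hD, abs_of_nonneg (by linarith : (0:ℝ) ≤ 0 + 0*y)]

lemma region1 (x : ℝ) (h0 : 0 ≤ x) (h4 : x ≤ 4/9) :
    ((∫ y in (0:ℝ)..1, |C23 x y - C23 y x|) = 5/18*x - 11/36*x^2) ∧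
    ((∫ y in (0:ℝ)..1, |C23 x y - C23 y x|^2) = 7/81*x^2 - 32/243*x^3) := by
  have hb1 : (0:ℝ) ≤ 2/3*x := by linarith
  have hb2 : 2/3*x ≤ x := by linarith
  have hb3 : x ≤ 3/2*x := by linarith
  have hb4 : 3/2*x ≤ (2/3:ℝ) := by linarith
  have hb5 : (2/3:ℝ) ≤ 1 := by norm_num
  have E1 := eR1P1 x h0 h4
  have E2 := eR1P2 x h0 h4
  have E3 := eR1P3 x h0 h4
  have E4 := eR1P4 x h0 h4
  have E5 := eR1P5 x h0 h4
  constructor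
  · have i1 := pieceII x _ _ _ _ hb1 E1
    have i2 := pieceII x _ _ _ _ hb2 E2
    have i3 := pieceII x _ _ _ _ hb3 E3
    have i4 := pieceII x _ _ _ _ hb4 E4
    have i5 := pieceII x _ _ _ _ hb5 E5
    rw [← integral_add_adjacent_intervals i1 (i2.trans (i3.trans (i4.trans i5))),
        ← integral_add_adjacent_intervals i2 (i3.trans (i4.trans i5)),
        ← integral_add_adjacent_intervals i3 (i4.trans i5),
        ← integral_add_adjacent_intervals i4 i5,
        piece1 x _ _ _ _ hb1 E1, piece1 x _ _ _ _ hb2 E2, piece1 x _ _ _ _ hb3 E3,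
        piece1 x _ _ _ _ hb4 E4, piece1 x _ _ _ _ hb5 E5]
    ring
  · have i1 := pieceII2 x _ _ _ _ hb1 E1
    have i2 := pieceII2 x _ _ _ _ hb2 E2
    have i3 := pieceII2 x _ _ _ _ hb3 E3
    have i4 := pieceII2 x _ _ _ _ hb4 E4
    have i5 := pieceII2 x _ _ _ _ hb5 E5
    rw [← integral_add_adjacent_intervals i1 (i2.trans (i3.trans (i4.trans i5))),
        ← integral_add_adjacent_intervals i2 (i3.trans (i4.trans i5)),
        ← integral_add_adjacent_intervals i3 (i4.trans i5),
        ← integral_add_adjacent_intervals i4 i5,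
        piece2 x _ _ _ _ hb1 E1, piece2 x _ _ _ _ hb2 E2, piece2 x _ _ _ _ hb3 E3,
        piece2 x _ _ _ _ hb4 E4, piece2 x _ _ _ _ hb5 E5]
    ring

lemma region2 (x : ℝ) (h4 : 4/9 ≤ x) (h6 : x ≤ 2/3) :
    ((∫ y in (0:ℝ)..1, |C23 x y - C23 y x|) = 5/18*x - 11/36*x^2) ∧
    ((∫ y in (0:ℝ)..1, |C23 x y - C23 y x|^2) =
      -16/243*x + 43/81*x^2 - 275/243*x^3 + 3/4*x^4) := by
  have hb1 : (0:ℝ) ≤ 2/3*x := by linarith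
  have hb2 : 2/3*x ≤ x := by linarith
  have hb3 : x ≤ (2/3:ℝ) := h6
  have hb4 : (2/3:ℝ) ≤ 3/2*x := by linarith
  have hb5 : 3/2*x ≤ (1:ℝ) := by linarith
  have E1 := eR2P1 x h4 h6
  have E2 := eR2P2 x h4 h6
  have E3 := eR2P3 x h4 h6
  have E4 := eR2P4 x h4 h6
  have E5 := eR2P5 x h4 h6
  constructor
  · have i1 := pieceII x _ _ _ _ hb1 E1
    have i2 := pieceII x _ _ _ _ hb2 E2
    have i3 := pieceII x _ _ _ _ hb3 E3
    have i4 := pieceII x _ _ _ _ hb4 E4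
    have i5 := pieceII x _ _ _ _ hb5 E5
    rw [← integral_add_adjacent_intervals i1 (i2.trans (i3.trans (i4.trans i5))),
        ← integral_add_adjacent_intervals i2 (i3.trans (i4.trans i5)),
        ← integral_add_adjacent_intervals i3 (i4.trans i5),
        ← integral_add_adjacent_intervals i4 i5,
        piece1 x _ _ _ _ hb1 E1, piece1 x _ _ _ _ hb2 E2, piece1 x _ _ _ _ hb3 E3,
        piece1 x _ _ _ _ hb4 E4, piece1 x _ _ _ _ hb5 E5]
    ring
  · have i1 := pieceII2 x _ _ _ _ hb1 E1
    have i2 := pieceII2 x _ _ _ _ hb2 E2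
    have i3 := pieceII2 x _ _ _ _ hb3 E3
    have i4 := pieceII2 x _ _ _ _ hb4 E4
    have i5 := pieceII2 x _ _ _ _ hb5 E5
    rw [← integral_add_adjacent_intervals i1 (i2.trans (i3.trans (i4.trans i5))),
        ← integral_add_adjacent_intervals i2 (i3.trans (i4.trans i5)),
        ← integral_add_adjacent_intervals i3 (i4.trans i5),
        ← integral_add_adjacent_intervals i4 i5,
        piece2 x _ _ _ _ hb1 E1, piece2 x _ _ _ _ hb2 E2, piece2 x _ _ _ _ hb3 E3,
        piece2 x _ _ _ _ hb4 E4, piece2 x _ _ _ _ hb5 E5]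
    ring

lemma region3 (x : ℝ) (h6 : 2/3 ≤ x) (h1 : x ≤ 1) :
    ((∫ y in (0:ℝ)..1, |C23 x y - C23 y x|) = 2/9*x - 2/9*x^2) ∧
    ((∫ y in (0:ℝ)..1, |C23 x y - C23 y x|^2) = 8/81*x^2 - 16/81*x^3 + 8/81*x^4) := by
  have hb1 : (0:ℝ) ≤ 2/3*x := by linarith
  have hb2 : 2/3*x ≤ (2/3:ℝ) := by linarith
  have hb3 : (2/3:ℝ) ≤ 1 := by norm_num
  have E1 := eR3P1 x h6 h1
  have E2 := eR3P2 x h6 h1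
  have E3 := eR3P3 x h6 h1
  constructor
  · have i1 := pieceII x _ _ _ _ hb1 E1
    have i2 := pieceII x _ _ _ _ hb2 E2
    have i3 := pieceII x _ _ _ _ hb3 E3
    rw [← integral_add_adjacent_intervals i1 (i2.trans i3),
        ← integral_add_adjacent_intervals i2 i3,
        piece1 x _ _ _ _ hb1 E1, piece1 x _ _ _ _ hb2 E2, piece1 x _ _ _ _ hb3 E3]
    ring
  · have i1 := pieceII2 x _ _ _ _ hb1 E1
    have i2 := pieceII2 x _ _ _ _ hb2 E2
    have i3 := pieceII2 x _ _ _ _ hb3 E3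
    rw [← integral_add_adjacent_intervals i1 (i2.trans i3),
        ← integral_add_adjacent_intervals i2 i3,
        piece2 x _ _ _ _ hb1 E1, piece2 x _ _ _ _ hb2 E2, piece2 x _ _ _ _ hb3 E3]
    ring

lemma opoly4 {f : ℝ → ℝ} (a b c0 c1 c2 c3 c4 : ℝ) (hab : a ≤ b)
    (h : ∀ x ∈ Set.Icc a b, f x = c0 + c1*x + c2*x^2 + c3*x^3 + c4*x^4) :
    (∫ x in a..b, f x) =
      (c0*b + c1*b^2/2 + c2*b^3/3 + c3*b^4/4 + c4*b^5/5)
      - (c0*a + c1*a^2/2 + c2*a^3/3 + c3*a^4/4 + c4*a^5/5) := by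
  rw [int_congr_Icc hab h]; exact ipoly4 a b c0 c1 c2 c3 c4

lemma oII {f : ℝ → ℝ} (a b c0 c1 c2 c3 c4 : ℝ) (hab : a ≤ b)
    (h : ∀ x ∈ Set.Icc a b, f x = c0 + c1*x + c2*x^2 + c3*x^3 + c4*x^4) :
    IntervalIntegrable f volume a b :=
  II_of_eq hab h (by continuity)

/-- Example 4.7: `μ₁(C_{2/3}) = 10/243` and
`μ₂(C_{2/3}) = (2/81)√(74/15)`. -/
theorem C23_mu_one_and_mu_two :
    (∫ x in (0:ℝ)..1, ∫ y in (0:ℝ)..1, |C23 x y - C23 y x|) = 10 / 243 ∧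
    Real.sqrt (∫ x in (0:ℝ)..1, ∫ y in (0:ℝ)..1, |C23 x y - C23 y x| ^ 2) =
      (2 / 81) * Real.sqrt (74 / 15) := by
  have ha : (0:ℝ) ≤ 4/9 := by norm_num
  have hbb : (4/9:ℝ) ≤ 2/3 := by norm_num
  have hc : (2/3:ℝ) ≤ 1 := by norm_num
  constructor
  · have hA : ∀ x ∈ Set.Icc (0:ℝ) (4/9),
        (∫ y in (0:ℝ)..1, |C23 x y - C23 y x|) =
          0 + 5/18*x + (-(11/36))*x^2 + 0*x^3 + 0*x^4 := by
      intro x hx; rw [(region1 x hx.1 hx.2).1]; ring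
    have hB : ∀ x ∈ Set.Icc (4/9:ℝ) (2/3),
        (∫ y in (0:ℝ)..1, |C23 x y - C23 y x|) =
          0 + 5/18*x + (-(11/36))*x^2 + 0*x^3 + 0*x^4 := by
      intro x hx; rw [(region2 x hx.1 hx.2).1]; ring
    have hC : ∀ x ∈ Set.Icc (2/3:ℝ) 1,
        (∫ y in (0:ℝ)..1, |C23 x y - C23 y x|) =
          0 + 2/9*x + (-(2/9))*x^2 + 0*x^3 + 0*x^4 := by
      intro x hx; rw [(region3 x hx.1 hx.2).1]; ring
    have IA := oII _ _ _ _ _ _ _ ha hA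
    have IB := oII _ _ _ _ _ _ _ hbb hB
    have IC := oII _ _ _ _ _ _ _ hc hC
    rw [← integral_add_adjacent_intervals IA (IB.trans IC),
        ← integral_add_adjacent_intervals IB IC,
        opoly4 _ _ _ _ _ _ _ ha hA, opoly4 _ _ _ _ _ _ _ hbb hB,
        opoly4 _ _ _ _ _ _ _ hc hC]
    norm_num
  · have key : (∫ x in (0:ℝ)..1, ∫ y in (0:ℝ)..1, |C23 x y - C23 y x| ^ 2)
        = 296/98415 := by
      have hA : ∀ x ∈ Set.Icc (0:ℝ) (4/9),
          (∫ y in (0:ℝ)..1, |C23 x y - C23 y x| ^ 2) =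
            0 + 0*x + 7/81*x^2 + (-(32/243))*x^3 + 0*x^4 := by
        intro x hx; rw [(region1 x hx.1 hx.2).2]; ring
      have hB : ∀ x ∈ Set.Icc (4/9:ℝ) (2/3),
          (∫ y in (0:ℝ)..1, |C23 x y - C23 y x| ^ 2) =
            0 + (-(16/243))*x + 43/81*x^2 + (-(275/243))*x^3 + 3/4*x^4 := by
        intro x hx; rw [(region2 x hx.1 hx.2).2]; ring
      have hC : ∀ x ∈ Set.Icc (2/3:ℝ) 1,
          (∫ y in (0:ℝ)..1, |C23 x y - C23 y x| ^ 2) =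
            0 + 0*x + 8/81*x^2 + (-(16/81))*x^3 + 8/81*x^4 := by
        intro x hx; rw [(region3 x hx.1 hx.2).2]; ring
      have IA := oII _ _ _ _ _ _ _ ha hA
      have IB := oII _ _ _ _ _ _ _ hbb hB
      have IC := oII _ _ _ _ _ _ _ hc hC
      rw [← integral_add_adjacent_intervals IA (IB.trans IC),
          ← integral_add_adjacent_intervals IB IC,
          opoly4 _ _ _ _ _ _ _ ha hA, opoly4 _ _ _ _ _ _ _ hbb hB,
          opoly4 _ _ _ _ _ _ _ hc hC]
      norm_num
    rw [key, show (296/98415 : ℝ) = (2/81)^2 * (74/15) by norm_num,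
      Real.sqrt_mul (by positivity) , Real.sqrt_sq (by norm_num : (0:ℝ) ≤ 2/81)]
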